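/- Suppose at iteration k the model is fully linear with error constants κ_ef, κ_eg, and the step s_k satisfies the Cauchy decrease. If Δ_k ≤ min{‖g_k‖/κ_bhm, ‖g_k‖(1−η₁)/(4κ_ef)}, then the denominator of ρ_k satisfies m_k(x_k) − m_k(x_k+s_k) ≥ (1/2)‖g_k‖Δ_k and |ρ_k − 1| ≤ 4κ_ef·Δ_k/‖g_k‖ ≤ 1 − η₁. -/

import Mathlib

/-- If the model is fully linear, the step satisfies the Cauchy decrease, and
`Δ_k ≤ min{‖g_k‖/κ_bhm, ‖g_k‖(1-η₁)/(4κ_ef)}`, then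
`m_k(x_k) - m_k(x_k+s_k) ≥ (1/2)‖g_k‖Δ_k` and
`|ρ_k - 1| ≤ 4κ_ef·Δ_k/‖g_k‖ ≤ 1 - η₁`. -/
theorem stmt11 {n : ℕ} (f mk : EuclideanSpace ℝ (Fin n) → ℝ)
    (xk sk : EuclideanSpace ℝ (Fin n)) (Δk κef κeg κbhm η₁ Hk : ℝ)
    (hΔ : 0 < Δk) (hκef : 0 < κef) (hκeg : 0 < κeg) (hκbhm : 0 < κbhm)
    (hη : η₁ ∈ Set.Ioo (0:ℝ) 1)
    (hHk0 : 0 ≤ Hk) (hHk : Hk ≤ κbhm)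
    (hsk : ‖sk‖ ≤ Δk)
    (hgne : gradient mk xk ≠ 0)
    (hFL : ∀ s : EuclideanSpace ℝ (Fin n), ‖s‖ ≤ Δk →
      |f (xk + s) - mk (xk + s)| ≤ κef * Δk ^ 2)
    (hCauchy : mk xk - mk (xk + sk) ≥
      (1 / 2) * ‖gradient mk xk‖ *
        min Δk (if Hk = 0 then Δk else ‖gradient mk xk‖ / Hk))
    (hΔsmall : Δk ≤ min (‖gradient mk xk‖ / κbhm)
      (‖gradient mk xk‖ * (1 - η₁) / (4 * κef))) :
    mk xk - mk (xk + sk) ≥ (1 / 2) * ‖gradient mk xk‖ * Δk ∧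
      |(f xk - f (xk + sk)) / (mk xk - mk (xk + sk)) - 1| ≤
        4 * κef * Δk / ‖gradient mk xk‖ ∧
      4 * κef * Δk / ‖gradient mk xk‖ ≤ 1 - η₁ := by
  set g : ℝ := ‖gradient mk xk‖ with hgdef
  have hg : 0 < g := norm_pos_iff.mpr hgne
  have hΔ1 : Δk ≤ g / κbhm := le_trans hΔsmall (min_le_left _ _)
  have hΔ2 : Δk ≤ g * (1 - η₁) / (4 * κef) := le_trans hΔsmall (min_le_right _ _)
  -- the min is Δk
  have hmin : min Δk (if Hk = 0 then Δk else g / Hk) = Δk := by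
    by_cases h0 : Hk = 0
    · simp [h0]
    · have hHkpos : 0 < Hk := lt_of_le_of_ne hHk0 (Ne.symm h0)
      rw [if_neg h0, min_eq_left]
      exact le_trans hΔ1 (div_le_div_of_nonneg_left hg.le hHkpos hHk)
  rw [hmin] at hCauchy
  have hDpos : 0 < mk xk - mk (xk + sk) :=
    lt_of_lt_of_le (by positivity) hCauchy
  refine ⟨hCauchy, ?_, ?_⟩
  · -- |ρ - 1| ≤ 4κef Δ / g
    set D : ℝ := mk xk - mk (xk + sk)
    set A : ℝ := f xk - f (xk + sk)
    have h0 : |f (xk + 0) - mk (xk + 0)| ≤ κef * Δk ^ 2 :=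
      hFL 0 (by simp [hΔ.le])
    have hs : |f (xk + sk) - mk (xk + sk)| ≤ κef * Δk ^ 2 := hFL sk hsk
    simp only [add_zero] at h0
    have hnum : |A - D| ≤ 2 * κef * Δk ^ 2 := by
      have : A - D = (f xk - mk xk) - (f (xk + sk) - mk (xk + sk)) := by
        simp only [A, D]; ring
      rw [this]
      calc |(f xk - mk xk) - (f (xk + sk) - mk (xk + sk))|
          ≤ |f xk - mk xk| + |f (xk + sk) - mk (xk + sk)| := abs_sub _ _
        _ ≤ κef * Δk ^ 2 + κef * Δk ^ 2 := add_le_add h0 hs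
        _ = 2 * κef * Δk ^ 2 := by ring
    have := hDpos
    calc |A / D - 1| = |A - D| / D := by
          rw [show A / D - 1 = (A - D) / D by field_simp, abs_div, abs_of_pos hDpos]
      _ ≤ (2 * κef * Δk ^ 2) / ((1 / 2) * g * Δk) :=
          div_le_div₀ (by positivity) hnum (by positivity) hCauchy
      _ = 4 * κef * Δk / g := by field_simp; ring
  · rw [div_le_iff₀ hg]
    calc 4 * κef * Δk ≤ 4 * κef * (g * (1 - η₁) / (4 * κef)) := by
          have := hκef; nlinarith
      _ = (1 - η₁) * g := by field_simp
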